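/- The function g(t) = ln|e^{it} + 2| − ln|e^{it} − 1| (defined for t not a multiple of 2π) satisfies g(2π/3) = 0 and g′(2π/3) = −√3/2. Consequently the correlation length ξ(t) = 1/|g(t)| diverges at the transition point t_c = 2π/3 as |t − t_c|^{−1}: precisely, |t − 2π/3|·ξ(t)⁻¹ → √3/2, i.e., ξ(t) ~ (2/√3)·|t − 2π/3|^{−1} as t → 2π/3. -/

import Mathlib

open Complex Real Filter

/-- `g(t) = ln|e^{it}+2| − ln|e^{it}−1|`, the inverse correlation length (up to
sign) of the 3-state Potts chain after the quench, with `ξ(t) = 1/|g(t)|`. -/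
noncomputable def pottsG (t : ℝ) : ℝ :=
  Real.log ‖Complex.exp (t * I) + 2‖ -
    Real.log ‖Complex.exp (t * I) - 1‖

lemma abs_plus (t : ℝ) : ‖Complex.exp (t * I) + 2‖ = Real.sqrt (5 + 4 * Real.cos t) := by
  rw [Complex.norm_def, Complex.normSq_apply]
  have hre : (Complex.exp (t * I) + 2).re = Real.cos t + 2 := by
    simp [Complex.exp_ofReal_mul_I_re]
  have him : (Complex.exp (t * I) + 2).im = Real.sin t := by
    simp [Complex.exp_ofReal_mul_I_im]
  rw [hre, him]
  congr 1
  have := Real.sin_sq_add_cos_sq t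
  nlinarith [this]

lemma abs_minus (t : ℝ) : ‖Complex.exp (t * I) - 1‖ = Real.sqrt (2 - 2 * Real.cos t) := by
  rw [Complex.norm_def, Complex.normSq_apply]
  have hre : (Complex.exp (t * I) - 1).re = Real.cos t - 1 := by
    simp [Complex.exp_ofReal_mul_I_re]
  have him : (Complex.exp (t * I) - 1).im = Real.sin t := by
    simp [Complex.exp_ofReal_mul_I_im]
  rw [hre, him]
  congr 1
  have := Real.sin_sq_add_cos_sq t
  nlinarith [this]

lemma pottsG_eq (t : ℝ) : pottsG t =
    Real.log (5 + 4 * Real.cos t) / 2 - Real.log (2 - 2 * Real.cos t) / 2 := by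
  have h1 : (0:ℝ) ≤ 5 + 4 * Real.cos t := by nlinarith [Real.neg_one_le_cos t]
  have h2 : (0:ℝ) ≤ 2 - 2 * Real.cos t := by nlinarith [Real.cos_le_one t]
  rw [pottsG, abs_plus, abs_minus, Real.log_sqrt h1, Real.log_sqrt h2]

lemma cos_tc : Real.cos (2 * π / 3) = -(1/2) := by
  have : (2 * π / 3 : ℝ) = π - π / 3 := by ring
  rw [this, Real.cos_pi_sub, Real.cos_pi_div_three]

lemma sin_tc : Real.sin (2 * π / 3) = Real.sqrt 3 / 2 := by
  have : (2 * π / 3 : ℝ) = π - π / 3 := by ring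
  rw [this, Real.sin_pi_sub, Real.sin_pi_div_three]

/-- `g(2π/3) = 0`, `g′(2π/3) = −√3/2`, and hence the correlation length
`ξ(t) = 1/|g(t)|` diverges at `t_c = 2π/3` as
`ξ(t) ~ (2/√3)·|t − 2π/3|⁻¹`, i.e. `ξ(t)⁻¹/|t − 2π/3| → √3/2`. -/
theorem stmt_15 :
    pottsG (2 * π / 3) = 0 ∧
    HasDerivAt pottsG (-(Real.sqrt 3) / 2) (2 * π / 3) ∧
    Filter.Tendsto (fun t : ℝ => |pottsG t| / |t - 2 * π / 3|)
      (nhdsWithin (2 * π / 3) {(2 * π / 3 : ℝ)}ᶜ)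
      (nhds (Real.sqrt 3 / 2)) := by
  have hval : pottsG (2 * π / 3) = 0 := by
    rw [pottsG_eq, cos_tc]; norm_num
  have hderiv : HasDerivAt pottsG (-(Real.sqrt 3) / 2) (2 * π / 3) := by
    set tc : ℝ := 2 * π / 3
    have hc1 : HasDerivAt (fun t : ℝ => 5 + 4 * Real.cos t) (4 * -Real.sin tc) tc :=
      ((Real.hasDerivAt_cos tc).const_mul 4).const_add 5
    have hc2 : HasDerivAt (fun t : ℝ => 2 - 2 * Real.cos t) (-(2 * -Real.sin tc)) tc :=
      ((Real.hasDerivAt_cos tc).const_mul 2).const_sub 2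
    have hv1 : 5 + 4 * Real.cos tc = 3 := by rw [cos_tc]; norm_num
    have hv2 : 2 - 2 * Real.cos tc = 3 := by rw [cos_tc]; norm_num
    have hl1 := (hc1.log (by rw [hv1]; norm_num)).div_const 2
    have hl2 := (hc2.log (by rw [hv2]; norm_num)).div_const 2
    have key := hl1.sub hl2
    have hfun : pottsG = fun t => Real.log (5 + 4 * Real.cos t) / 2 - Real.log (2 - 2 * Real.cos t) / 2 :=
      funext pottsG_eq
    rw [hfun]
    refine HasDerivAt.congr_deriv key ?_
    rw [hv1, hv2, sin_tc]
    field_simp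
    ring
  refine ⟨hval, hderiv, ?_⟩
  have hd := hderiv
  rw [hasDerivAt_iff_tendsto_slope] at hd
  have habs := hd.abs
  have heq : (fun t : ℝ => |slope pottsG (2 * π / 3) t|) =
      fun t : ℝ => |pottsG t| / |t - 2 * π / 3| := by
    funext t
    rw [slope_def_field, hval]
    rw [abs_div]
    simp [div_eq_div_iff]
  rw [heq] at habs
  have h3 : |-(Real.sqrt 3) / 2| = Real.sqrt 3 / 2 := by
    rw [_root_.abs_of_nonpos (by linarith [Real.sqrt_nonneg 3])]
    ring
  rwa [h3] at habs
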